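/- Let D be the circular cone in ℝ^3 and M_1 = diag(1,−1), M_2 = [[0,1],[1,0]], M_3 = [[0,i],[−i,0]]. Let N_0, N_1, N_2 be n×n Hermitian matrices of the form N_0 = P*P+Q*Q, N_1 = P*Q+Q*P, N_2 = i(Q*P−P*Q) for some P,Q ∈ Mat_{r,n}(ℂ). Then with N_3 := P*P − Q*Q, the matrix N_0⊗I_2 + N_1⊗M_1 + N_2⊗M_2 + N_3⊗M_3 is positive semidefinite. -/

import Mathlib

open ComplexOrder Matrix Kronecker

theorem stmt6 (r n : ℕ) (P Q : Matrix (Fin r) (Fin n) ℂ) :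
    ((Pᴴ * P + Qᴴ * Q) ⊗ₖ (1 : Matrix (Fin 2) (Fin 2) ℂ)
      + (Pᴴ * Q + Qᴴ * P) ⊗ₖ !![(1 : ℂ), 0; 0, -1]
      + (Complex.I • (Qᴴ * P - Pᴴ * Q)) ⊗ₖ !![(0 : ℂ), 1; 1, 0]
      + (Pᴴ * P - Qᴴ * Q) ⊗ₖ !![(0 : ℂ), Complex.I; -Complex.I, 0]).PosSemidef := by
  set A : Matrix (Fin r) (Fin n × Fin 2) ℂ :=
    Matrix.of (fun k p => if p.2 = 0 then (P + Q) k p.1 else Complex.I * (P - Q) k p.1) with hA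
  have key : ((Pᴴ * P + Qᴴ * Q) ⊗ₖ (1 : Matrix (Fin 2) (Fin 2) ℂ)
      + (Pᴴ * Q + Qᴴ * P) ⊗ₖ !![(1 : ℂ), 0; 0, -1]
      + (Complex.I • (Qᴴ * P - Pᴴ * Q)) ⊗ₖ !![(0 : ℂ), 1; 1, 0]
      + (Pᴴ * P - Qᴴ * Q) ⊗ₖ !![(0 : ℂ), Complex.I; -Complex.I, 0]) = Aᴴ * A := by
    ext ⟨j, s⟩ ⟨j', s'⟩
    fin_cases s <;> fin_cases s' <;>
      simp [hA, Matrix.mul_apply, Matrix.kroneckerMap_apply, Matrix.conjTranspose_apply,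
        Matrix.one_apply, Fin.ext_iff, -Fin.val_eq_zero_iff, star_mul', Complex.conj_I, Finset.mul_sum,
        Finset.sum_mul, ← Finset.sum_sub_distrib, ← Finset.sum_add_distrib,
        ← Finset.sum_neg_distrib] <;>
      (refine Finset.sum_congr rfl fun k _ => ?_; ring_nf; try rw [Complex.I_sq]; ring)
  rw [key]
  exact Matrix.posSemidef_conjTranspose_mul_self A
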